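/- Descent-of-surrogate implies descent of IPM: under the assumptions of the surrogate bound, define L_θ(θ') = g(p_{θ'}, f_{α*(θ)}, q) + 2l‖θ'−θ‖. Then L_θ(θ) = Φ(p_θ, q), and for any θ' we have Φ(p_{θ'}, q) − Φ(p_θ, q) ≤ L_θ(θ') − L_θ(θ); in particular if L_θ(θ') < L_θ(θ) then Φ(p_{θ'}, q) < Φ(p_θ, q). -/
import Mathlib


/-- Descent of the surrogate implies descent of the IPM. With
`L_θ(θ') = g(p_{θ'}, f_{α*(θ)}, q) + 2l‖θ'−θ‖`, one has `L_θ(θ) = Φ(p_θ, q)`,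
`Φ(p_{θ'}, q) − Φ(p_θ, q) ≤ L_θ(θ') − L_θ(θ)`, and if `L_θ(θ') < L_θ(θ)` then
`Φ(p_{θ'}, q) < Φ(p_θ, q)`. -/
theorem stmt6 {m : ℕ} {A : Type*}
    (g : EuclideanSpace ℝ (Fin m) → A → ℝ)  -- g θ α = g(p_θ, f_α, q)
    (l : ℝ) (hl : 0 ≤ l)
    (hLip : ∀ (α : A) (θ θ' : EuclideanSpace ℝ (Fin m)), |g θ α - g θ' α| ≤ l * ‖θ - θ'‖)
    (αstar : EuclideanSpace ℝ (Fin m) → A)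
    (hmax : ∀ θ α, g θ α ≤ g θ (αstar θ))
    (Φ : EuclideanSpace ℝ (Fin m) → ℝ)
    (hΦ : ∀ θ, Φ θ = g θ (αstar θ))
    (L : EuclideanSpace ℝ (Fin m) → EuclideanSpace ℝ (Fin m) → ℝ)
    (hL : ∀ θ θ', L θ θ' = g θ' (αstar θ) + 2 * l * ‖θ' - θ‖) :
    (∀ θ, L θ θ = Φ θ)
    ∧ (∀ θ θ', Φ θ' - Φ θ ≤ L θ θ' - L θ θ)
    ∧ (∀ θ θ', L θ θ' < L θ θ → Φ θ' < Φ θ) := by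
  have hLL : ∀ θ, L θ θ = Φ θ := by
    intro θ; simp [hL, hΦ]
  have key : ∀ θ θ', Φ θ' ≤ L θ θ' := by
    intro θ θ'
    have h1 : g θ' (αstar θ') - g θ (αstar θ') ≤ l * ‖θ' - θ‖ :=
      (abs_le.mp (hLip (αstar θ') θ' θ)).2
    have h2 : g θ (αstar θ') ≤ g θ (αstar θ) := hmax θ (αstar θ')
    have h3 : g θ (αstar θ) - g θ' (αstar θ) ≤ l * ‖θ - θ'‖ :=
      le_trans (le_abs_self _) (hLip (αstar θ) θ θ')
    have hnorm : ‖θ - θ'‖ = ‖θ' - θ‖ := norm_sub_rev θ θ'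
    rw [hΦ, hL]
    rw [hnorm] at h3
    nlinarith
  refine ⟨hLL, fun θ θ' => ?_, fun θ θ' h => ?_⟩
  · have := key θ θ'; rw [hLL θ]; linarith
  · have := key θ θ'; rw [hLL θ] at h; linarith
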